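/- If h : ℝ → ℝ is three times differentiable and satisfies h'' - 3 h h' + h(h² - 4) = 0 on ℝ, then ψ(χ, τ) := h(χ - ω τ) satisfies the PDE ∂³_τ ψ + (3/2) ω³ ∂²_χ(ψ²) - ω³ ∂_χ( ψ(ψ² - 4) ) = 0. -/

import Mathlib

private lemma hdA (f : ℝ → ℝ) (hf : Differentiable ℝ f) (ω χ s : ℝ) :
    HasDerivAt (fun s : ℝ => f (χ - ω * s)) (-ω * deriv f (χ - ω * s)) s := by
  have h1 : HasDerivAt (fun s : ℝ => χ - ω * s) (-ω) s := by
    simpa using ((hasDerivAt_id s).const_mul ω).const_sub χ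
  simpa [mul_comm, Function.comp_def] using ((hf (χ - ω * s)).hasDerivAt.comp s h1)

private lemma hdB (f : ℝ → ℝ) (hf : Differentiable ℝ f) (b c : ℝ) :
    HasDerivAt (fun c : ℝ => f (c - b)) (deriv f (c - b)) c := by
  have h1 : HasDerivAt (fun c : ℝ => c - b) 1 c := (hasDerivAt_id c).sub_const b
  simpa [Function.comp_def] using ((hf (c - b)).hasDerivAt.comp c h1)

/-- If `h` satisfies `h'' - 3 h h' + h (h² - 4) = 0` on `ℝ`, then the
travelling wave `ψ (χ, τ) = h (χ - ω τ)` satisfies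
`∂³_τ ψ + (3/2) ω³ ∂²_χ (ψ²) - ω³ ∂_χ (ψ (ψ² - 4)) = 0`. -/
theorem stmt14 (h : ℝ → ℝ) (ω : ℝ)
    (hdiff : Differentiable ℝ h) (hdiff' : Differentiable ℝ (deriv h))
    (hdiff'' : Differentiable ℝ (deriv (deriv h)))
    (hODE : ∀ t, deriv (deriv h) t - 3 * h t * deriv h t + h t * ((h t) ^ 2 - 4) = 0) :
    ∀ χ τ : ℝ,
      deriv (fun s => deriv (fun s' => deriv (fun s'' => h (χ - ω * s'')) s') s) τ +
        (3 / 2) * ω ^ 3 * deriv (fun c => deriv (fun c' => (h (c' - ω * τ)) ^ 2) c) χ -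
        ω ^ 3 * deriv (fun c => h (c - ω * τ) * ((h (c - ω * τ)) ^ 2 - 4)) χ = 0 := by
  intro χ τ
  set x := χ - ω * τ with hx
  -- h''' from differentiating the ODE
  have hconst : (fun t => deriv (deriv h) t - 3 * h t * deriv h t + h t * ((h t) ^ 2 - 4))
      = fun _ => (0 : ℝ) := funext hODE
  have h3 : ∀ t, HasDerivAt (deriv (deriv h))
      (3 * deriv h t * deriv h t + 3 * h t * deriv (deriv h) t
        - (deriv h t * ((h t)^2 - 4) + h t * (2 * h t * deriv h t))) t := by
    intro t
    have hA : HasDerivAt (fun t => deriv (deriv h) t - 3 * h t * deriv h t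
        + h t * ((h t) ^ 2 - 4)) 0 t := by
      rw [hconst]; exact hasDerivAt_const t 0
    have hB : HasDerivAt (fun t => 3 * h t * deriv h t - h t * ((h t)^2 - 4))
        ((3 * deriv h t * deriv h t + 3 * h t * deriv (deriv h) t)
          - (deriv h t * ((h t)^2 - 4) + h t * (2 * h t * deriv h t))) t := by
      have h1 : HasDerivAt (fun t => 3 * h t * deriv h t)
          (3 * deriv h t * deriv h t + 3 * h t * deriv (deriv h) t) t := by
        simpa [mul_assoc, mul_comm, mul_left_comm] using
          (((hdiff t).hasDerivAt.const_mul 3).fun_mul (hdiff' t).hasDerivAt)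
      have h2 : HasDerivAt (fun t => h t * ((h t)^2 - 4))
          (deriv h t * ((h t)^2 - 4) + h t * (2 * h t * deriv h t)) t := by
        have hsq : HasDerivAt (fun t => (h t)^2 - 4) (2 * h t * deriv h t) t := by
          simpa [mul_comm, mul_assoc] using
            (((hdiff t).hasDerivAt.pow 2).sub_const 4)
        simpa using (hdiff t).hasDerivAt.fun_mul hsq
      exact h1.sub h2
    have := hA.fun_add hB
    simpa [sub_add_eq_add_sub, add_sub_cancel_left] using
      (by simpa [add_comm, add_left_comm, sub_eq_add_neg, add_assoc] using this :
        HasDerivAt (fun t => deriv (deriv h) t)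
          (0 + ((3 * deriv h t * deriv h t + 3 * h t * deriv (deriv h) t)
            - (deriv h t * ((h t)^2 - 4) + h t * (2 * h t * deriv h t)))) t)
  have hddd : deriv (deriv (deriv h)) x
      = 3 * deriv h x * deriv h x + 3 * h x * deriv (deriv h) x
        - (deriv h x * ((h x)^2 - 4) + h x * (2 * h x * deriv h x)) := (h3 x).deriv
  -- τ derivatives
  have D1 : deriv (fun s'' => h (χ - ω * s'')) = fun s => -ω * deriv h (χ - ω * s) :=
    funext fun s => (hdA h hdiff ω χ s).deriv
  have D2 : (fun s => deriv (fun s' => deriv (fun s'' => h (χ - ω * s'')) s') s)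
      = fun s => -ω * (-ω * deriv (deriv h) (χ - ω * s)) := by
    funext s
    have : (fun s' => deriv (fun s'' => h (χ - ω * s'')) s')
        = fun s' => -ω * deriv h (χ - ω * s') := by rw [D1]
    rw [this]
    exact ((hdA (deriv h) hdiff' ω χ s).const_mul (-ω)).deriv
  have D3 : deriv (fun s => deriv (fun s' => deriv (fun s'' => h (χ - ω * s'')) s') s) τ
      = -ω * (-ω * (-ω * deriv (deriv (deriv h)) x)) := by
    rw [D2]
    exact (((hdA (deriv (deriv h)) hdiff'' ω χ τ).const_mul (-ω)).const_mul (-ω)).deriv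
  -- χ derivatives
  have E1 : deriv (fun c' => (h (c' - ω * τ)) ^ 2)
      = fun c => 2 * h (c - ω * τ) * deriv h (c - ω * τ) := by
    funext c
    simpa [mul_comm, mul_assoc] using ((hdB h hdiff (ω * τ) c).fun_pow 2).deriv
  have E2 : deriv (fun c => deriv (fun c' => (h (c' - ω * τ)) ^ 2) c) χ
      = 2 * (deriv h x * deriv h x + h x * deriv (deriv h) x) := by
    have : (fun c => deriv (fun c' => (h (c' - ω * τ)) ^ 2) c)
        = fun c => 2 * (h (c - ω * τ) * deriv h (c - ω * τ)) := by
      rw [show (fun c => deriv (fun c' => (h (c' - ω * τ)) ^ 2) c)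
          = deriv (fun c' => (h (c' - ω * τ)) ^ 2) from rfl, E1]
      funext c; ring
    rw [this]
    have hmul : HasDerivAt (fun c => h (c - ω * τ) * deriv h (c - ω * τ))
        (deriv h x * deriv h x + h x * deriv (deriv h) x) χ := by
      have := (hdB h hdiff (ω * τ) χ).fun_mul (hdB (deriv h) hdiff' (ω * τ) χ)
      simpa [hx, sub_right_comm] using this
    simpa using (hmul.const_mul 2).deriv
  have E3 : deriv (fun c => h (c - ω * τ) * ((h (c - ω * τ)) ^ 2 - 4)) χ
      = deriv h x * ((h x)^2 - 4) + h x * (2 * h x * deriv h x) := by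
    have hsq : HasDerivAt (fun c => (h (c - ω * τ))^2 - 4)
        (2 * h x * deriv h x) χ := by
      have := ((hdB h hdiff (ω * τ) χ).pow 2).sub_const 4
      simpa [hx, sub_right_comm, mul_comm, mul_assoc] using this
    have := (hdB h hdiff (ω * τ) χ).fun_mul hsq
    simpa [hx, sub_right_comm] using this.deriv
  have hxeq : χ - ω * τ = x := rfl
  rw [D3, E2, E3, hddd]
  ring
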